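/- Let (X, 𝒜) be a measurable space and I a proper ideal of the ring M(X). The following are equivalent: (1) I is a prime ideal; (2) I contains a prime ideal of M(X); (3) for all f, g ∈ M(X), if f·g = 0 then f ∈ I or g ∈ I; (4) for every f ∈ M(X) there exists g ∈ I such that f does not change sign on Z(g), i.e., f(x) ≥ 0 for all x ∈ Z(g) or f(x) ≤ 0 for all x ∈ Z(g). -/

import Mathlib

open Set

/-- The ring of all real-valued measurable functions on a measurable space `X`,
as a subring of the pointwise ring `X → ℝ`. -/
def Mring (X : Type*) [MeasurableSpace X] : Subring (X → ℝ) where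
  carrier := {f | Measurable f}
  mul_mem' hf hg := hf.mul hg
  one_mem' := measurable_one
  add_mem' hf hg := hf.add hg
  zero_mem' := measurable_zero
  neg_mem' hf := hf.neg

/-- The zero-set of a measurable function. -/
def zset {X : Type*} [MeasurableSpace X] (f : Mring X) : Set X :=
  {x | (f : X → ℝ) x = 0}

/-- The cozero-set of a measurable function. -/
def coz {X : Type*} [MeasurableSpace X] (f : Mring X) : Set X :=
  {x | (f : X → ℝ) x ≠ 0}

lemma mring_zideal {X : Type*} [MeasurableSpace X] (I : Ideal (Mring X))
    {g f : Mring X} (hg : g ∈ I) (hsub : zset g ⊆ zset f) : f ∈ I := by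
  have hmeas : Measurable (fun x => if (g:X→ℝ) x = 0 then (0:ℝ) else (f:X→ℝ) x / (g:X→ℝ) x) := by
    apply Measurable.ite
    · exact measurableSet_eq_fun g.2 measurable_const
    · exact measurable_const
    · exact f.2.div g.2
  have key : f = (⟨_, hmeas⟩ : Mring X) * g := by
    apply Subtype.ext
    funext x
    show (f:X→ℝ) x = (if (g:X→ℝ) x = 0 then (0:ℝ) else (f:X→ℝ) x / (g:X→ℝ) x) * (g:X→ℝ) x
    by_cases hx : (g:X→ℝ) x = 0
    · have hfx : (f:X→ℝ) x = 0 := hsub hx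
      simp [hx, hfx]
    · rw [if_neg hx, div_mul_cancel₀ _ hx]
  rw [key]
  exact I.mul_mem_left _ hg

/-- For a proper ideal `I` of `M(X)` the following are equivalent:
(1) `I` is prime; (2) `I` contains a prime ideal; (3) `f·g = 0` implies
`f ∈ I` or `g ∈ I`; (4) for every `f ∈ M(X)` there is `g ∈ I` such that `f`
does not change sign on `Z(g)`. -/
theorem stmt_8 {X : Type*} [MeasurableSpace X] (I : Ideal (Mring X)) (hI : I ≠ ⊤) :
    List.TFAE
      [I.IsPrime,
       ∃ P : Ideal (Mring X), P.IsPrime ∧ P ≤ I,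
       ∀ f g : Mring X, f * g = 0 → f ∈ I ∨ g ∈ I,
       ∀ f : Mring X, ∃ g ∈ I,
         (∀ x ∈ zset g, 0 ≤ (f : X → ℝ) x) ∨ (∀ x ∈ zset g, (f : X → ℝ) x ≤ 0)] := by
  tfae_have 1 → 2 := fun h => ⟨I, h, le_refl I⟩
  tfae_have 2 → 3 := by
    rintro ⟨P, hP, hPI⟩ f g hfg
    have : f * g ∈ P := by rw [hfg]; exact P.zero_mem
    rcases hP.mem_or_mem this with h | h
    · exact Or.inl (hPI h)
    · exact Or.inr (hPI h)
  tfae_have 3 → 4 := by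
    intro h3 f
    have hmax : Measurable (fun x => max ((f:X→ℝ) x) 0) := f.2.max measurable_const
    have hmin : Measurable (fun x => min ((f:X→ℝ) x) 0) := f.2.min measurable_const
    set g : Mring X := ⟨_, hmax⟩
    set h : Mring X := ⟨_, hmin⟩
    have hprod : g * h = 0 := by
      apply Subtype.ext; funext x
      show max ((f:X→ℝ) x) 0 * min ((f:X→ℝ) x) 0 = 0
      rcases le_total ((f:X→ℝ) x) 0 with hx | hx
      · rw [max_eq_right hx]; ring
      · rw [min_eq_right hx]; ring
    rcases h3 g h hprod with hg | hh
    · refine ⟨g, hg, Or.inr fun x hx => ?_⟩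
      have : max ((f:X→ℝ) x) 0 = 0 := hx
      exact (le_max_left _ _).trans this.le
    · refine ⟨h, hh, Or.inl fun x hx => ?_⟩
      have : min ((f:X→ℝ) x) 0 = 0 := hx
      rcases le_total ((f:X→ℝ) x) 0 with hx' | hx'
      · rw [min_eq_left hx'] at this; exact le_of_eq this.symm
      · exact hx'
  tfae_have 4 → 1 := by
    intro h4
    refine ⟨hI, ?_⟩
    intro f h hfh
    have hk : Measurable (fun x => |(f:X→ℝ) x| - |(h:X→ℝ) x|) := f.2.abs.sub h.2.abs
    obtain ⟨g, hg, hsign⟩ := h4 ⟨_, hk⟩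
    have hkI : g * g + (f * h) * (f * h) ∈ I := I.add_mem (I.mul_mem_left _ hg) (I.mul_mem_left _ hfh)
    have hz : ∀ x ∈ zset (g * g + (f * h) * (f * h)),
        (g:X→ℝ) x = 0 ∧ (f:X→ℝ) x * (h:X→ℝ) x = 0 := by
      intro x hx
      have : (g:X→ℝ) x * (g:X→ℝ) x + ((f:X→ℝ) x * (h:X→ℝ) x) * ((f:X→ℝ) x * (h:X→ℝ) x) = 0 := hx
      constructor
      · nlinarith [sq_nonneg ((g:X→ℝ) x), sq_nonneg ((f:X→ℝ) x * (h:X→ℝ) x)]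
      · nlinarith [sq_nonneg ((g:X→ℝ) x), sq_nonneg ((f:X→ℝ) x * (h:X→ℝ) x)]
    rcases hsign with hpos | hneg
    · -- |f| - |h| ≥ 0 on Z(g), i.e. |h| ≤ |f|; product zero ⇒ h = 0 there
      right
      apply mring_zideal I hkI
      intro x hx
      obtain ⟨hgx, hfhx⟩ := hz x hx
      have h1 : (0:ℝ) ≤ |(f:X→ℝ) x| - |(h:X→ℝ) x| := hpos x hgx
      show (h:X→ℝ) x = 0
      rcases mul_eq_zero.mp hfhx with hf0 | hh0
      · have : |(h:X→ℝ) x| ≤ 0 := by rw [hf0] at h1; simpa using h1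
        exact abs_eq_zero.mp (le_antisymm this (abs_nonneg _))
      · exact hh0
    · left
      apply mring_zideal I hkI
      intro x hx
      obtain ⟨hgx, hfhx⟩ := hz x hx
      have h1 : |(f:X→ℝ) x| - |(h:X→ℝ) x| ≤ 0 := hneg x hgx
      show (f:X→ℝ) x = 0
      rcases mul_eq_zero.mp hfhx with hf0 | hh0
      · exact hf0
      · have : |(f:X→ℝ) x| ≤ 0 := by rw [hh0] at h1; simpa using h1
        exact abs_eq_zero.mp (le_antisymm this (abs_nonneg _))
  tfae_finish
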